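/- For two 2-dimensional probability vectors p = (p₁, 1−p₁) and q = (q₁, 1−q₁) with T = |p₁ − q₁|, the binary entropies satisfy |H(p) − H(q)| ≤ −T log₂ T − (1−T) log₂(1−T). -/

import Mathlib

/-- Scalar entropy contribution `H(x) = -x log₂ x` (with `0 log₂ 0 = 0`). -/
noncomputable def Hbit (x : ℝ) : ℝ := -(x * Real.logb 2 x)

/-- Binary Shannon entropy `H((x, 1-x))`. -/
noncomputable def binEnt (x : ℝ) : ℝ := Hbit x + Hbit (1 - x)

open Real in
lemma binEnt_eq (x : ℝ) : binEnt x = binEntropy x / Real.log 2 := by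
  simp [binEnt, Hbit, binEntropy, Real.logb, Real.log_inv]
  ring

open Real in
lemma binEntropy_subadd {a b : ℝ} (ha : 0 ≤ a) (hb : 0 ≤ b) (hab : a + b ≤ 1) :
    binEntropy (a + b) ≤ binEntropy a + binEntropy b := by
  rcases eq_or_lt_of_le ha with rfl | ha'
  · simp
  rcases eq_or_lt_of_le hb with rfl | hb'
  · simp
  set s := a + b with hs
  have hspos : 0 < s := by positivity
  have hcc := strictConcave_binEntropy.concaveOn
  have h0 : (0:ℝ) ∈ Set.Icc (0:ℝ) 1 := by constructor <;> norm_num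
  have hsmem : s ∈ Set.Icc (0:ℝ) 1 := ⟨by positivity, hab⟩
  have h1 := hcc.2 h0 hsmem (show (0:ℝ) ≤ b/s by positivity)
    (show (0:ℝ) ≤ a/s by positivity) (by field_simp; try (rw [hs]; ring))
  have h2 := hcc.2 h0 hsmem (show (0:ℝ) ≤ a/s by positivity)
    (show (0:ℝ) ≤ b/s by positivity) (by field_simp; exact hs.symm)
  have ea : (a/s) * s = a := by field_simp
  have eb : (b/s) * s = b := by field_simp
  simp only [smul_eq_mul, mul_zero, zero_add, binEntropy_zero, ea, eb] at h1 h2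
  have hsum : (a/s) * binEntropy s + (b/s) * binEntropy s = binEntropy s := by
    field_simp
    rw [hs]; ring
  linarith

open Real in
lemma key {p q : ℝ} (hp0 : 0 ≤ p) (hq1 : q ≤ 1) (hpq : p ≤ q) :
    |binEntropy p - binEntropy q| ≤ binEntropy (q - p) := by
  have hT : 0 ≤ q - p := by linarith
  rw [abs_sub_le_iff]
  constructor
  · -- binEntropy p ≤ binEntropy q + binEntropy (q-p)
    have h := binEntropy_subadd (a := 1 - q) (b := q - p) (by linarith) hT (by linarith)
    have e1 : 1 - q + (q - p) = 1 - p := by ring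
    rw [e1, binEntropy_one_sub, binEntropy_one_sub] at h
    linarith
  · have h := binEntropy_subadd (a := p) (b := q - p) hp0 hT (by linarith)
    have e1 : p + (q - p) = q := by ring
    rw [e1] at h
    linarith

/-- The `d = 2` case of the sharp Fannes inequality. -/
theorem sharp_fannes_qubit (p₁ q₁ : ℝ) (hp0 : 0 ≤ p₁) (hp1 : p₁ ≤ 1)
    (hq0 : 0 ≤ q₁) (hq1 : q₁ ≤ 1) (T : ℝ) (hT : T = |p₁ - q₁|) :
    |binEnt p₁ - binEnt q₁| ≤ -(T * Real.logb 2 T) - (1 - T) * Real.logb 2 (1 - T) := by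
  have hrhs : -(T * Real.logb 2 T) - (1 - T) * Real.logb 2 (1 - T) = binEnt T := by
    simp [binEnt, Hbit]; ring
  rw [hrhs, binEnt_eq, binEnt_eq, binEnt_eq, div_sub_div_same, abs_div,
    abs_of_pos (Real.log_pos one_lt_two)]
  have hlog : (0:ℝ) < Real.log 2 := Real.log_pos one_lt_two
  rw [div_le_div_iff_of_pos_right hlog]
  rcases le_total p₁ q₁ with h | h
  · have : T = q₁ - p₁ := by rw [hT, abs_sub_comm, abs_of_nonneg (by linarith)]
    subst this
    exact key hp0 hq1 h
  · have : T = p₁ - q₁ := by rw [hT, abs_of_nonneg (by linarith)]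
    subst this
    rw [abs_sub_comm]
    exact key hq0 hp1 h
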